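/- Let H be an n×n real symmetric positive definite matrix, let α < 0, and let k₂ > 0. Then for all z, g ∈ ℝⁿ with z ≠ g, zᵀ(z − g) / ‖H⁻¹(z − g)‖^{α} ≤ (k₂/(2−α)) · λ_max(H)^{2−α} · ‖z‖^{2−α} + ((1−α)/(2−α)) · k₂^{−1/(1−α)} · λ_min(H)^{α−2} · ‖z − g‖^{2−α}. -/

import Mathlib

open scoped InnerProductSpace

/-- Matrix-vector multiplication viewed as a map on Euclidean space. -/
noncomputable def mulVecE {n : ℕ} (H : Matrix (Fin n) (Fin n) ℝ)
    (w : EuclideanSpace ℝ (Fin n)) : EuclideanSpace ℝ (Fin n) :=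
  (EuclideanSpace.equiv (Fin n) ℝ).symm (H.mulVec (EuclideanSpace.equiv (Fin n) ℝ w))

open Matrix

lemma mulVecE_adj {n : ℕ} (H : Matrix (Fin n) (Fin n) ℝ) (x y : EuclideanSpace ℝ (Fin n)) :
    ⟪x, mulVecE H y⟫_ℝ = ⟪mulVecE Hᵀ x, y⟫_ℝ := by
  simp only [mulVecE, PiLp.inner_apply, RCLike.inner_apply, conj_trivial,
    Matrix.mulVec, dotProduct, Matrix.transpose_apply,
    PiLp.continuousLinearEquiv_apply, PiLp.continuousLinearEquiv_symm_apply,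
    WithLp.equiv_apply, WithLp.equiv_symm_apply, PiLp.toLp_apply]
  simp only [Finset.mul_sum, Finset.sum_mul]
  rw [Finset.sum_comm]
  exact Finset.sum_congr rfl fun i _ => Finset.sum_congr rfl fun j _ => by ring

lemma mulVecE_eigen {n : ℕ} {H : Matrix (Fin n) (Fin n) ℝ} (hH : H.IsHermitian) (i : Fin n) :
    mulVecE H (hH.eigenvectorBasis i) = hH.eigenvalues i • hH.eigenvectorBasis i := by
  have h := hH.mulVec_eigenvectorBasis i
  apply (EuclideanSpace.equiv (Fin n) ℝ).injective
  simp only [mulVecE, ContinuousLinearEquiv.apply_symm_apply, _root_.map_smul]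
  ext j
  have : H.mulVec (⇑(hH.eigenvectorBasis i)) j = (hH.eigenvalues i • ⇑(hH.eigenvectorBasis i)) j := by
    rw [h]
  simp [EuclideanSpace.equiv] at this ⊢
  exact this

lemma repr_mulVecE {n : ℕ} {H : Matrix (Fin n) (Fin n) ℝ} (hH : H.IsHermitian)
    (v : EuclideanSpace ℝ (Fin n)) (i : Fin n) :
    hH.eigenvectorBasis.repr (mulVecE H v) i
      = hH.eigenvalues i * hH.eigenvectorBasis.repr v i := by
  rw [OrthonormalBasis.repr_apply_apply, OrthonormalBasis.repr_apply_apply,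
    mulVecE_adj]
  have ht : Hᵀ = H := by
    ext i j
    have := congrFun (congrFun hH.eq i) j
    simpa [Matrix.conjTranspose_apply] using this
  rw [ht, mulVecE_eigen hH i, real_inner_smul_left]

lemma norm_mulVecE_ge {n : ℕ} {H : Matrix (Fin n) (Fin n) ℝ} (hH : H.IsHermitian)
    {c : ℝ} (hc : 0 ≤ c) (hmin : ∀ i, c ≤ hH.eigenvalues i) (v : EuclideanSpace ℝ (Fin n)) :
    c * ‖v‖ ≤ ‖mulVecE H v‖ := by
  have hsq : (c * ‖v‖) ^ 2 ≤ ‖mulVecE H v‖ ^ 2 := by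
    have e1 : ∀ w : EuclideanSpace ℝ (Fin n), ‖w‖ ^ 2 = ∑ i, (hH.eigenvectorBasis.repr w i) ^ 2 := by
      intro w
      rw [← hH.eigenvectorBasis.repr.norm_map w, EuclideanSpace.norm_eq]
      rw [Real.sq_sqrt (by positivity)]
      simp [sq_abs]
    rw [mul_pow, e1, e1, Finset.mul_sum]
    apply Finset.sum_le_sum
    intro i _
    rw [repr_mulVecE hH, mul_pow]
    exact mul_le_mul_of_nonneg_right (pow_le_pow_left₀ hc (hmin i) 2) (sq_nonneg _)
  exact le_of_pow_le_pow_left₀ two_ne_zero (norm_nonneg _) hsq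

theorem stmt7 (n : ℕ) (H : Matrix (Fin n) (Fin n) ℝ) (hH : H.PosDef)
    (lammin lammax : ℝ)
    (hminmem : ∃ i, hH.1.eigenvalues i = lammin)
    (hmin : ∀ i, lammin ≤ hH.1.eigenvalues i)
    (hmaxmem : ∃ i, hH.1.eigenvalues i = lammax)
    (hmax : ∀ i, hH.1.eigenvalues i ≤ lammax)
    (α : ℝ) (hα : α < 0) (k₂ : ℝ) (hk₂ : 0 < k₂)
    (z g : EuclideanSpace ℝ (Fin n)) (hzg : z ≠ g) :
    ⟪z, z - g⟫_ℝ / ‖mulVecE H⁻¹ (z - g)‖ ^ α ≤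
      k₂ / (2 - α) * lammax ^ (2 - α) * ‖z‖ ^ (2 - α) +
        (1 - α) / (2 - α) * k₂ ^ (-(1 / (1 - α))) * lammin ^ (α - 2) * ‖z - g‖ ^ (2 - α) := by
  obtain ⟨i0, hi0⟩ := hminmem
  obtain ⟨i1, hi1⟩ := hmaxmem
  have hlammin : 0 < lammin := hi0 ▸ hH.eigenvalues_pos i0
  have hminmax : lammin ≤ lammax := hi1 ▸ hmin i1
  have hlammax : 0 < lammax := hlammin.trans_le hminmax
  set w := z - g with hw
  have hw0 : w ≠ 0 := sub_ne_zero.mpr hzg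
  have hwn : 0 < ‖w‖ := norm_pos_iff.mpr hw0
  have hdet : IsUnit H.det := isUnit_iff_ne_zero.mpr hH.det_pos.ne'
  have hinv : mulVecE H (mulVecE H⁻¹ w) = w := by
    simp only [mulVecE, ContinuousLinearEquiv.apply_symm_apply]
    rw [Matrix.mulVec_mulVec, Matrix.mul_nonsing_inv _ hdet, Matrix.one_mulVec,
      ContinuousLinearEquiv.symm_apply_apply]
  have h3 : mulVecE H⁻¹ w ≠ 0 := by
    intro h
    apply hw0
    rw [← hinv, h]
    simp [mulVecE]
  have hN : 0 < ‖mulVecE H⁻¹ w‖ := norm_pos_iff.mpr h3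
  have hub : ‖mulVecE H⁻¹ w‖ ≤ lammin⁻¹ * ‖w‖ := by
    rw [le_inv_mul_iff₀ hlammin]
    calc lammin * ‖mulVecE H⁻¹ w‖ ≤ ‖mulVecE H (mulVecE H⁻¹ w)‖ :=
          norm_mulVecE_ge hH.1 hlammin.le hmin _
      _ = ‖w‖ := by rw [hinv]
  have hα2 : (0:ℝ) < 2 - α := by linarith
  have hα1 : (0:ℝ) < 1 - α := by linarith
  have hpq : (2 - α).HolderConjugate ((2 - α)/(1 - α)) := by
    rw [Real.holderConjugate_iff]
    constructor
    · linarith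
    · field_simp
      ring
  have hk2p : 0 < k₂ ^ (1/(2 - α)) := Real.rpow_pos_of_pos hk₂ _
  set A := k₂ ^ (1/(2 - α)) * (lammax * ‖z‖) with hA
  set B := k₂ ^ (-(1/(2 - α))) * lammax⁻¹ * (lammin ^ α * ‖w‖ ^ (1 - α)) with hB
  have hA0 : 0 ≤ A := by positivity
  have hB0 : 0 ≤ B := by positivity
  have young := Real.young_inequality_of_nonneg hA0 hB0 hpq
  have hABm : A * B = lammin ^ α * (‖z‖ * ‖w‖ ^ (1 - α)) := by
    rw [hA, hB, show k₂ ^ (1/(2-α)) * (lammax * ‖z‖) *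
        (k₂ ^ (-(1/(2-α))) * lammax⁻¹ * (lammin ^ α * ‖w‖ ^ (1-α)))
      = (k₂ ^ (1/(2-α)) * k₂ ^ (-(1/(2-α)))) * (lammax * lammax⁻¹) *
        (lammin ^ α * (‖z‖ * ‖w‖ ^ (1-α))) from by ring,
      ← Real.rpow_add hk₂, add_neg_cancel, Real.rpow_zero,
      mul_inv_cancel₀ hlammax.ne', one_mul, one_mul]
  have hAp : A ^ (2 - α) = k₂ * (lammax ^ (2 - α) * ‖z‖ ^ (2 - α)) := by
    rw [hA, Real.mul_rpow hk2p.le (by positivity),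
      Real.mul_rpow hlammax.le (norm_nonneg z),
      ← Real.rpow_mul hk₂.le, one_div, inv_mul_cancel₀ hα2.ne', Real.rpow_one]
  have hBq : B ^ ((2 - α)/(1 - α)) ≤ k₂ ^ (-(1/(1-α))) * lammin ^ (α - 2) * ‖w‖ ^ (2 - α) := by
    have e1 : B ^ ((2 - α)/(1 - α)) =
        k₂ ^ (-(1/(1-α))) * (lammax ^ (-((2 - α)/(1 - α))) * lammin ^ (α * ((2 - α)/(1 - α)))) *
          ‖w‖ ^ (2 - α) := by
      rw [hB, Real.mul_rpow (by positivity) (by positivity),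
        Real.mul_rpow (by positivity) (by positivity),
        Real.mul_rpow (by positivity) (by positivity),
        ← Real.rpow_mul hk₂.le,
        show -(1/(2-α)) * ((2-α)/(1-α)) = -(1/(1-α)) from by
          field_simp,
        Real.inv_rpow hlammax.le, ← Real.rpow_neg hlammax.le,
        ← Real.rpow_mul hlammin.le,
        ← Real.rpow_mul (norm_nonneg w),
        show (1-α) * ((2-α)/(1-α)) = 2-α from by field_simp]
      ring
    rw [e1]
    have hq0 : 0 < (2 - α)/(1 - α) := by positivity
    have hkey : lammax ^ (-((2 - α)/(1 - α))) * lammin ^ (α * ((2 - α)/(1 - α)))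
        ≤ lammin ^ (α - 2) := by
      calc lammax ^ (-((2 - α)/(1 - α))) * lammin ^ (α * ((2 - α)/(1 - α)))
          ≤ lammin ^ (-((2 - α)/(1 - α))) * lammin ^ (α * ((2 - α)/(1 - α))) := by
            exact mul_le_mul_of_nonneg_right
              (Real.rpow_le_rpow_of_nonpos hlammin hminmax (neg_nonpos_of_nonneg hq0.le))
              (Real.rpow_nonneg hlammin.le _)
        _ = lammin ^ (-((2 - α)/(1 - α)) + α * ((2 - α)/(1 - α))) := by
            rw [← Real.rpow_add hlammin]
        _ = lammin ^ (α - 2) := by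
            congr 1
            field_simp
            ring
    calc k₂ ^ (-(1/(1-α))) * (lammax ^ (-((2 - α)/(1 - α))) * lammin ^ (α * ((2 - α)/(1 - α))))
          * ‖w‖ ^ (2 - α)
        ≤ k₂ ^ (-(1/(1-α))) * lammin ^ (α - 2) * ‖w‖ ^ (2 - α) := by
          apply mul_le_mul_of_nonneg_right _ (Real.rpow_nonneg (norm_nonneg w) _)
          exact mul_le_mul_of_nonneg_left hkey (Real.rpow_nonneg hk₂.le _)
      _ = k₂ ^ (-(1/(1-α))) * lammin ^ (α - 2) * ‖w‖ ^ (2 - α) := rfl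
  have hq_inv : ((2 - α)/(1 - α))⁻¹ = (1 - α)/(2 - α) := by
    rw [inv_div]
  calc ⟪z, w⟫_ℝ / ‖mulVecE H⁻¹ w‖ ^ α
      ≤ ‖z‖ * ‖w‖ / ‖mulVecE H⁻¹ w‖ ^ α := by
        gcongr
        exact real_inner_le_norm z w
    _ = ‖z‖ * ‖w‖ * ‖mulVecE H⁻¹ w‖ ^ (-α) := by
        rw [Real.rpow_neg hN.le, div_eq_mul_inv]
    _ ≤ ‖z‖ * ‖w‖ * (lammin⁻¹ * ‖w‖) ^ (-α) := by
        apply mul_le_mul_of_nonneg_left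
          (Real.rpow_le_rpow hN.le hub (by linarith)) (by positivity)
    _ = A * B := by
        rw [hABm, Real.mul_rpow (by positivity) (norm_nonneg w),
          Real.inv_rpow hlammin.le, ← Real.rpow_neg hlammin.le, neg_neg,
          show (1:ℝ) - α = 1 + -α from by ring,
          Real.rpow_add hwn, Real.rpow_one]
        ring
    _ ≤ A ^ (2 - α) / (2 - α) + B ^ ((2 - α)/(1 - α)) / ((2 - α)/(1 - α)) := young
    _ ≤ k₂ / (2 - α) * lammax ^ (2 - α) * ‖z‖ ^ (2 - α) +
        (1 - α) / (2 - α) * k₂ ^ (-(1 / (1 - α))) * lammin ^ (α - 2) * ‖w‖ ^ (2 - α) := by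
        apply add_le_add
        · rw [hAp]; ring_nf; exact le_refl _
        · rw [div_eq_mul_inv, hq_inv]
          calc B ^ ((2 - α)/(1 - α)) * ((1 - α)/(2 - α))
              ≤ (k₂ ^ (-(1/(1-α))) * lammin ^ (α - 2) * ‖w‖ ^ (2 - α)) * ((1 - α)/(2 - α)) := by
                exact mul_le_mul_of_nonneg_right hBq (by positivity)
            _ = (1 - α) / (2 - α) * k₂ ^ (-(1 / (1 - α))) * lammin ^ (α - 2) * ‖w‖ ^ (2 - α) := by
                ring
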